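/- arXiv:1912.05335 — 3 statements merged into one kernel-verified Lean document; each statement's English description precedes it below -/
import Mathlib

section
/- Let k ≥ 0, let y ∈ ℝ^{2^k} be a unit vector (‖y‖ = 1), and let α_j, α̃_j ∈ ℝ for 0 ≤ j < 2^k satisfy |α_j − α̃_j| ≤ δ for some δ ≥ 0. Then the Euclidean distance between the corresponding splits satisfies ‖split(y,α) − split(y,α̃)‖ ≤ √2 · δ. -/
/-- The index `⌊i/2⌋ : Fin (2^k)` of an index `i : Fin (2^(k+1))`. -/
def halfIdx {k : ℕ} (i : Fin (2 ^ (k + 1))) : Fin (2 ^ k) :=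
  ⟨i.val / 2, by have := i.isLt; simp only [pow_succ] at this; omega⟩

/-- The split of a vector `y ∈ ℝ^{2^k}` by angles `α`: the vector in
`ℝ^{2^{k+1}}` with entries `split(y,α)_{2j} = y_j cos α_j` and
`split(y,α)_{2j+1} = y_j sin α_j`. -/
noncomputable def split (k : ℕ) (y α : Fin (2 ^ k) → ℝ) :
    EuclideanSpace ℝ (Fin (2 ^ (k + 1))) :=
  WithLp.toLp 2 fun i =>
    if i.val % 2 = 0 then y (halfIdx i) * Real.cos (α (halfIdx i))
    else y (halfIdx i) * Real.sin (α (halfIdx i))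

lemma aux_abs_sin_sub_sin (a b : ℝ) : |Real.sin a - Real.sin b| ≤ |a - b| := by
  rw [Real.sin_sub_sin, abs_mul, abs_mul, abs_two]
  calc 2 * |Real.sin ((a - b) / 2)| * |Real.cos ((a + b) / 2)|
      ≤ 2 * |(a - b) / 2| * 1 := by
        apply mul_le_mul (mul_le_mul_of_nonneg_left Real.abs_sin_le_abs (by norm_num))
          (Real.abs_cos_le_one _) (abs_nonneg _) (by positivity)
    _ = |a - b| := by rw [mul_one, abs_div, abs_two]; ring

lemma aux_abs_cos_sub_cos (a b : ℝ) : |Real.cos a - Real.cos b| ≤ |a - b| := by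
  rw [Real.cos_sub_cos, abs_mul, abs_mul]
  have : |(-2 : ℝ)| = 2 := by norm_num
  rw [this]
  calc 2 * |Real.sin ((a + b) / 2)| * |Real.sin ((a - b) / 2)|
      ≤ 2 * 1 * |(a - b) / 2| := by
        apply mul_le_mul (mul_le_mul_of_nonneg_left (Real.abs_sin_le_one _) (by norm_num))
          Real.abs_sin_le_abs (abs_nonneg _) (by positivity)
    _ = |a - b| := by rw [mul_one, abs_div, abs_two]; ring

lemma sum_range_two_mul_div (n : ℕ) (g : ℕ → ℝ) :
    ∑ i ∈ Finset.range (2 * n), g (i / 2) = ∑ j ∈ Finset.range n, 2 * g j := by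
  induction n with
  | zero => simp
  | succ n ih =>
    have h2 : 2 * (n + 1) = (2 * n + 1) + 1 := by ring
    rw [h2, Finset.sum_range_succ, Finset.sum_range_succ, ih, Finset.sum_range_succ]
    have ha : (2 * n) / 2 = n := by omega
    have hb : (2 * n + 1) / 2 = n := by omega
    rw [ha, hb]; ring

/-- If `y ∈ ℝ^{2^k}` is a unit vector and the two families of angles satisfy
`|α_j − α̃_j| ≤ δ` with `δ ≥ 0`, then
`‖split(y,α) − split(y,α̃)‖ ≤ √2 · δ`. -/
theorem norm_split_sub_split_of_close_angles (k : ℕ)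
    (y : EuclideanSpace ℝ (Fin (2 ^ k))) (hy : ‖y‖ = 1)
    (α αt : Fin (2 ^ k) → ℝ) (δ : ℝ) (hδ : 0 ≤ δ)
    (h : ∀ j, |α j - αt j| ≤ δ) :
    ‖split k y α - split k y αt‖ ≤ Real.sqrt 2 * δ := by
  have hsumy : ∑ j, (y j) ^ 2 = 1 := by
    have h1 := hy
    rw [EuclideanSpace.norm_eq, Real.sqrt_eq_one] at h1
    simpa [Real.norm_eq_abs, sq_abs] using h1
  have hcoord : ∀ i : Fin (2 ^ (k + 1)),
      ‖(split k y α - split k y αt) i‖ ^ 2 ≤ (y (halfIdx i)) ^ 2 * δ ^ 2 := by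
    intro i
    have hsub : (split k y α - split k y αt) i = split k y α i - split k y αt i := rfl
    set j := halfIdx i
    have key : |split k y α i - split k y αt i| ≤ |y j| * δ := by
      by_cases hp : i.val % 2 = 0
      · simp only [split, hp, if_true]
        rw [← mul_sub, abs_mul]
        exact mul_le_mul_of_nonneg_left ((aux_abs_cos_sub_cos _ _).trans (h j)) (abs_nonneg _)
      · simp only [split, hp, if_false]
        rw [← mul_sub, abs_mul]
        exact mul_le_mul_of_nonneg_left ((aux_abs_sin_sub_sin _ _).trans (h j)) (abs_nonneg _)
    rw [hsub]
    have hn : ‖split k y α i - split k y αt i‖ = |split k y α i - split k y αt i| := rfl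
    rw [hn]
    calc |split k y α i - split k y αt i| ^ 2 ≤ (|y j| * δ) ^ 2 :=
          pow_le_pow_left₀ (abs_nonneg _) key 2
      _ = (y j) ^ 2 * δ ^ 2 := by rw [mul_pow, sq_abs]
  have hsum : ∑ i, ‖(split k y α - split k y αt) i‖ ^ 2 ≤ 2 * δ ^ 2 := by
    set g : ℕ → ℝ := fun m => (if hm : m < 2 ^ k then (y ⟨m, hm⟩) ^ 2 else 0) * δ ^ 2 with hg
    calc ∑ i, ‖(split k y α - split k y αt) i‖ ^ 2
        ≤ ∑ i, (y (halfIdx i)) ^ 2 * δ ^ 2 := Finset.sum_le_sum fun i _ => hcoord i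
      _ = ∑ i : Fin (2 ^ (k + 1)), g (i.val / 2) := by
          refine Finset.sum_congr rfl fun i _ => ?_
          have hlt : i.val / 2 < 2 ^ k := (halfIdx i).isLt
          simp [hg, hlt, halfIdx]
      _ = ∑ m ∈ Finset.range (2 ^ (k + 1)), g (m / 2) :=
          Fin.sum_univ_eq_sum_range (fun m => g (m / 2)) _
      _ = ∑ j ∈ Finset.range (2 ^ k), 2 * g j := by
          rw [show 2 ^ (k + 1) = 2 * 2 ^ k by rw [pow_succ]; ring]
          exact sum_range_two_mul_div _ g
      _ = ∑ j : Fin (2 ^ k), 2 * g j.val :=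
          (Fin.sum_univ_eq_sum_range (fun m => 2 * g m) _).symm
      _ = ∑ j : Fin (2 ^ k), 2 * δ ^ 2 * (y j) ^ 2 := by
          refine Finset.sum_congr rfl fun j _ => ?_
          simp [hg, j.isLt]
          ring
      _ = 2 * δ ^ 2 := by rw [← Finset.mul_sum, hsumy, mul_one]
  rw [EuclideanSpace.norm_eq]
  have heq : Real.sqrt 2 * δ = Real.sqrt (2 * δ ^ 2) := by
    rw [Real.sqrt_mul (by norm_num), Real.sqrt_sq hδ]
  rw [heq]
  exact Real.sqrt_le_sqrt (by simpa using hsum)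
end

section
/- Let n ≥ 1, N = 2^n, let x ∈ ℝ^N be nonzero with x_i ≥ 0 for all i, and set α_i = arccos(x_i / max_j x_j) ∈ [0, π/2]. Let δ > 0 and let α̃_i ∈ ℝ satisfy 0 ≤ α̃_i ≤ α_i and α_i − α̃_i < δ for all i. Let x_r ∈ ℝ^N be the unit vector with entries cos α_i / √(Σ_j cos² α_j) (equivalently x_i/‖x‖), and let x̃_r be the unit vector with entries cos α̃_i / √(Σ_j cos² α̃_j). Then the Euclidean distance satisfies ‖x_r − x̃_r‖ ≤ 2^{2n+1}·δ. -/
set_option maxHeartbeats 800000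


/-- The largest entry `max_j x_j` of a vector `x : Fin (2^n) → ℝ`. -/
noncomputable def maxEntry (n : ℕ) (x : Fin (2 ^ n) → ℝ) : ℝ :=
  Finset.univ.sup' ⟨⟨0, Nat.two_pow_pos n⟩, Finset.mem_univ _⟩ x

/-- Lipschitz-type bound for cosine on `[0, π]`. -/
lemma cos_sub_cos_le_of_le {s t : ℝ} (hs : 0 ≤ s) (hst : s ≤ t) (ht : t ≤ Real.pi) :
    Real.cos s - Real.cos t ≤ t - s := by
  have h1 : Real.cos s - Real.cos t =
      2 * Real.sin ((s + t) / 2) * Real.sin ((t - s) / 2) := by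
    rw [Real.cos_sub_cos, show (s - t) / 2 = -((t - s) / 2) by ring, Real.sin_neg]
    ring
  have h2 : Real.sin ((s + t) / 2) ≤ 1 := Real.sin_le_one _
  have h3 : 0 ≤ Real.sin ((s + t) / 2) :=
    Real.sin_nonneg_of_nonneg_of_le_pi (by linarith) (by linarith [Real.pi_pos])
  have h4 : Real.sin ((t - s) / 2) ≤ (t - s) / 2 := Real.sin_le (by linarith)
  have h5 : 0 ≤ Real.sin ((t - s) / 2) :=
    Real.sin_nonneg_of_nonneg_of_le_pi (by linarith) (by linarith [Real.pi_pos])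
  nlinarith

/-- Fidelity bound for the probabilistic state-preparation algorithm.
For a nonzero `x ∈ ℝ^{2^n}` with nonnegative entries, angles
`α_i = arccos(x_i / max_j x_j)` and approximate angles `α̃_i` with
`0 ≤ α̃_i ≤ α_i` and `α_i − α̃_i < δ`, the unit vectors with entries
`cos α_i / √(Σ_j cos² α_j)` and `cos α̃_i / √(Σ_j cos² α̃_j)` are within
Euclidean distance `2^{2n+1}·δ`. -/
theorem probabilistic_fidelity (n : ℕ) (hn : 1 ≤ n) (x : Fin (2 ^ n) → ℝ)
    (hx0 : x ≠ 0) (hxnn : ∀ i, 0 ≤ x i)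
    (α : Fin (2 ^ n) → ℝ)
    (hα : ∀ i, α i = Real.arccos (x i / maxEntry n x))
    (δ : ℝ) (hδ : 0 < δ) (αt : Fin (2 ^ n) → ℝ)
    (hαt : ∀ i, 0 ≤ αt i ∧ αt i ≤ α i ∧ α i - αt i < δ) :
    Real.sqrt (∑ i,
      (Real.cos (α i) / Real.sqrt (∑ j, Real.cos (α j) ^ 2) -
        Real.cos (αt i) / Real.sqrt (∑ j, Real.cos (αt j) ^ 2)) ^ 2) ≤
      2 ^ (2 * n + 1) * δ := by
  set M := maxEntry n x with hMdef
  have hMle : ∀ i, x i ≤ M := fun i => Finset.le_sup' x (Finset.mem_univ i)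
  obtain ⟨i0, hi0⟩ : ∃ i, x i ≠ 0 := by
    by_contra h; push_neg at h; exact hx0 (funext h)
  have hMpos : 0 < M :=
    lt_of_lt_of_le (lt_of_le_of_ne (hxnn i0) (Ne.symm hi0)) (hMle i0)
  -- cosines
  set a : Fin (2 ^ n) → ℝ := fun i => Real.cos (α i) with ha_def
  set b : Fin (2 ^ n) → ℝ := fun i => Real.cos (αt i) with hb_def
  have ha_eq : ∀ i, a i = x i / M := by
    intro i
    show Real.cos (α i) = x i / M
    rw [hα i]
    have h0 : 0 ≤ x i / M := div_nonneg (hxnn i) hMpos.le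
    exact Real.cos_arccos (by linarith) ((div_le_one hMpos).mpr (hMle i))
  have ha_nonneg : ∀ i, 0 ≤ a i := fun i => by
    rw [ha_eq i]; exact div_nonneg (hxnn i) hMpos.le
  have hα_nonneg : ∀ i, 0 ≤ α i := fun i => (hα i) ▸ Real.arccos_nonneg _
  have hα_le_pi : ∀ i, α i ≤ Real.pi := fun i => (hα i) ▸ Real.arccos_le_pi _
  have hab : ∀ i, a i ≤ b i := fun i =>
    Real.cos_le_cos_of_nonneg_of_le_pi (hαt i).1 (hα_le_pi i) (hαt i).2.1
  have hb_le1 : ∀ i, b i ≤ 1 := fun i => Real.cos_le_one _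
  have hba : ∀ i, b i - a i < δ := by
    intro i
    have := cos_sub_cos_le_of_le (hαt i).1 (hαt i).2.1 (hα_le_pi i)
    have h2 := (hαt i).2.2
    simp only [ha_def, hb_def]
    linarith
  -- sum of squares ≥ 1
  obtain ⟨j0, -, hj0⟩ := Finset.exists_mem_eq_sup'
    (⟨⟨0, Nat.two_pow_pos n⟩, Finset.mem_univ _⟩ : Finset.univ.Nonempty) x
  have haj0 : a j0 = 1 := by rw [ha_eq j0, ← hj0]; exact div_self hMpos.ne'
  set SA := ∑ j, a j ^ 2 with hSA
  set SB := ∑ j, b j ^ 2 with hSB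
  have hSA1 : 1 ≤ SA := by
    have h := Finset.single_le_sum (f := fun j => a j ^ 2)
      (fun j _ => sq_nonneg _) (Finset.mem_univ j0)
    simp only [haj0, one_pow] at h
    exact h
  have hSASB : SA ≤ SB :=
    Finset.sum_le_sum fun i _ => pow_le_pow_left₀ (ha_nonneg i) (hab i) 2
  set A := Real.sqrt SA with hA
  set B := Real.sqrt SB with hB
  have hA1 : 1 ≤ A := by
    rw [hA, show (1:ℝ) = Real.sqrt 1 by simp]
    exact Real.sqrt_le_sqrt hSA1
  have hB1 : 1 ≤ B := by
    rw [hB, show (1:ℝ) = Real.sqrt 1 by simp]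
    exact Real.sqrt_le_sqrt (hSA1.trans hSASB)
  have hApos : 0 < A := lt_of_lt_of_le one_pos hA1
  have hBpos : 0 < B := lt_of_lt_of_le one_pos hB1
  have hAle : A ≤ B := Real.sqrt_le_sqrt hSASB
  have hA2 : A ^ 2 = SA := Real.sq_sqrt (le_trans zero_le_one hSA1)
  have hB2 : B ^ 2 = SB := Real.sq_sqrt (le_trans zero_le_one (hSA1.trans hSASB))
  set N : ℝ := (2 : ℝ) ^ n with hN
  have hN2 : (2:ℝ) ≤ N := by
    rw [hN]
    calc (2:ℝ) = 2 ^ 1 := by norm_num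
    _ ≤ 2 ^ n := by exact pow_le_pow_right₀ (by norm_num) hn
  -- B - A ≤ N * δ
  have hBA : B - A ≤ N * δ := by
    have hsum : SB - SA ≤ 2 * N * δ := by
      have : SB - SA = ∑ j, (b j ^ 2 - a j ^ 2) := by
        rw [hSA, hSB, ← Finset.sum_sub_distrib]
      rw [this]
      have : ∑ j, (b j ^ 2 - a j ^ 2) ≤ ∑ _j : Fin (2 ^ n), 2 * δ := by
        refine Finset.sum_le_sum fun i _ => ?_
        nlinarith [hab i, hba i, hb_le1 i, ha_nonneg i]
      refine this.trans ?_
      rw [Finset.sum_const, Finset.card_univ, Fintype.card_fin, nsmul_eq_mul]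
      push_cast [hN]
      ring_nf
      exact le_refl _
    have hpr : 0 ≤ (B - A) * (B + A - 2) :=
      mul_nonneg (sub_nonneg.mpr hAle) (by linarith)
    nlinarith [hA2, hB2, hpr]
  -- per-index bound
  have hbB : ∀ i, b i ≤ B := by
    intro i
    have h1 : b i ^ 2 ≤ SB :=
      Finset.single_le_sum (f := fun j => b j ^ 2) (fun j _ => sq_nonneg _)
        (Finset.mem_univ i)
    nlinarith [(ha_nonneg i).trans (hab i)]
  have key : ∀ i, (a i / A - b i / B) ^ 2 ≤ ((N + 1) * δ) ^ 2 := by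
    intro i
    have hnum : a i / A - b i / B = (a i * B - b i * A) / (A * B) := by
      field_simp
    have hABpos : 0 < A * B := mul_pos hApos hBpos
    have hup : a i / A - b i / B ≤ (N + 1) * δ := by
      rw [hnum, div_le_iff₀ hABpos]
      have h1 : a i * B - b i * A ≤ b i * (B - A) := by nlinarith [hab i, hBpos]
      have h2 : b i * (B - A) ≤ N * δ := by
        nlinarith [hbB i, (ha_nonneg i).trans (hab i), hBA, hb_le1 i,
          sub_nonneg.mpr hAle]
      have hAB : 1 ≤ A * B := by nlinarith [hA1, hB1]
      have h3 : (N + 1) * δ * 1 ≤ (N + 1) * δ * (A * B) :=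
        mul_le_mul_of_nonneg_left hAB (by positivity)
      nlinarith [hδ.le, hN2]
    have hlo : -((N + 1) * δ) ≤ a i / A - b i / B := by
      rw [hnum, le_div_iff₀ hABpos]
      have h1 : b i * A - a i * B ≤ (b i - a i) * A := by
        nlinarith [ha_nonneg i, hAle, hApos]
      have h2 : (b i - a i) * A ≤ δ * A := by
        nlinarith [hba i, hApos]
      have h3 : δ * A ≤ (N + 1) * δ * (A * B) := by
        have hNB : 1 ≤ (N + 1) * B := by nlinarith [hN2, hB1]
        nlinarith [mul_nonneg (mul_nonneg hδ.le hApos.le) (sub_nonneg.mpr hNB)]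
      nlinarith [hδ.le]
    have habs : |a i / A - b i / B| ≤ (N + 1) * δ := abs_le.mpr ⟨hlo, hup⟩
    calc (a i / A - b i / B) ^ 2 = |a i / A - b i / B| ^ 2 := (sq_abs _).symm
    _ ≤ ((N + 1) * δ) ^ 2 := by
        exact pow_le_pow_left₀ (abs_nonneg _) habs 2
  -- summing
  have hsum : (∑ i, (a i / A - b i / B) ^ 2) ≤ (2 ^ (2 * n + 1) * δ) ^ 2 := by
    have h1 : (∑ i, (a i / A - b i / B) ^ 2) ≤ N * ((N + 1) * δ) ^ 2 := by
      have := Finset.sum_le_sum (fun i (_ : i ∈ Finset.univ) => key i)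
      refine this.trans ?_
      rw [Finset.sum_const, Finset.card_univ, Fintype.card_fin, nsmul_eq_mul]
      push_cast [hN]
      exact le_refl _
    refine h1.trans ?_
    have h2 : (2:ℝ) ^ (2 * n + 1) = 2 * N ^ 2 := by
      rw [hN, ← pow_mul]; ring
    rw [h2]
    have hNN : N * (N + 1) ^ 2 ≤ 4 * N ^ 4 := by
      have e1 : 2 * N ^ 3 ≤ N ^ 4 := by
        nlinarith [mul_nonneg (pow_nonneg (by linarith : (0:ℝ) ≤ N) 3)
          (by linarith : (0:ℝ) ≤ N - 2)]
      have e2 : N ^ 2 ≤ N ^ 3 := by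
        nlinarith [mul_nonneg (sq_nonneg N) (by linarith : (0:ℝ) ≤ N - 1)]
      have e3 : N ≤ N ^ 2 := by
        nlinarith [mul_nonneg (by linarith : (0:ℝ) ≤ N) (by linarith : (0:ℝ) ≤ N - 1)]
      nlinarith [e1, e2, e3]
    calc N * ((N + 1) * δ) ^ 2 = (N * (N + 1) ^ 2) * δ ^ 2 := by ring
    _ ≤ (4 * N ^ 4) * δ ^ 2 := mul_le_mul_of_nonneg_right hNN (sq_nonneg δ)
    _ = (2 * N ^ 2 * δ) ^ 2 := by ring
  calc Real.sqrt (∑ i, (a i / A - b i / B) ^ 2)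
      ≤ Real.sqrt ((2 ^ (2 * n + 1) * δ) ^ 2) := Real.sqrt_le_sqrt hsum
    _ = 2 ^ (2 * n + 1) * δ := Real.sqrt_sq (by positivity)
end

section
/- Let n ≥ 2, N = 2^n, and let x ∈ ℂ^N be a nonzero vector with polar decomposition x_i = r_i e^{iθ_i}, r_i ≥ 0, θ_i ∈ [0,2π). Let ε > 0, and set t = ⌈log₂(2(n−1)√2·π/ε)⌉ + 1 and t' = n + 1 + ⌈log₂(2π/ε)⌉. Let p_i = r_i²/‖x‖², let x̃_R ∈ ℝ^N be produced by the deterministic iterative construction from any angle approximations α̃^k_j with α̃^0_0 = α^0_0 and |α̃^k_j − α^k_j| ≤ π/2^{t−1} (1 ≤ k ≤ n−1), and let θ̃_i ∈ ℝ satisfy |θ_i − θ̃_i| ≤ 2π/2^{t'}. Define x̃ ∈ ℂ^N by x̃_i = e^{iθ̃_i}·(x̃_R)_i. Then the Euclidean distance satisfies ‖x/‖x‖ − x̃‖ ≤ ε. -/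
/-- The index `2j : Fin (2^(k+1))` of an index `j : Fin (2^k)`. -/
def dbl {k : ℕ} (j : Fin (2 ^ k)) : Fin (2 ^ (k + 1)) :=
  ⟨2 * j.val, by have := j.isLt; simp only [pow_succ]; omega⟩

/-- The index `2j+1 : Fin (2^(k+1))` of an index `j : Fin (2^k)`. -/
def dbl1 {k : ℕ} (j : Fin (2 ^ k)) : Fin (2 ^ (k + 1)) :=
  ⟨2 * j.val + 1, by have := j.isLt; simp only [pow_succ]; omega⟩

set_option maxHeartbeats 1000000
open Real Finset



/-- chord ≤ arc -/
lemma chord_le (a b : ℝ) :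
    ‖Complex.exp (a * Complex.I) - Complex.exp (b * Complex.I)‖ ≤ |a - b| := by
  have h : Complex.exp (a * Complex.I) - Complex.exp (b * Complex.I)
      = Complex.exp (b * Complex.I) * (Complex.exp ((a - b) * Complex.I) - 1) := by
    rw [mul_sub, ← Complex.exp_add, mul_one]; ring_nf
  rw [h, norm_mul, Complex.norm_exp_ofReal_mul_I]
  set c := a - b
  have : ‖Complex.exp ((c : ℝ) * Complex.I) - 1‖ = 2 * |Real.sin (c / 2)| := by
    rw [Complex.exp_mul_I]
    have : (Complex.cos c + Complex.sin c * Complex.I - 1)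
        = Complex.ofReal (Real.cos c - 1) + Complex.ofReal (Real.sin c) * Complex.I := by
      simp [Complex.ofReal_cos, Complex.ofReal_sin]; ring
    rw [this]
    rw [Complex.norm_def, Complex.normSq_add_mul_I]
    have hc : (Real.cos c - 1) ^ 2 + Real.sin c ^ 2 = 2 * (1 - Real.cos c) := by
      have := Real.sin_sq_add_cos_sq c; nlinarith
    rw [hc]
    have h2 : 2 * (1 - Real.cos c) = (2 * |Real.sin (c/2)|)^2 := by
      have := Real.abs_sin_half c
      have h1 : |Real.sin (c/2)|^2 = (1 - Real.cos c)/2 := by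
        rw [this, Real.sq_sqrt]; nlinarith [Real.cos_le_one c]
      nlinarith
    rw [h2, Real.sqrt_sq (by positivity)]
  rw [one_mul, show ((a:ℂ) - b) = ((c:ℝ):ℂ) by push_cast [c]; ring, this]
  calc 2 * |Real.sin (c / 2)| ≤ 2 * |c / 2| := by
        have := Real.abs_sin_le_abs (x := c / 2); linarith
    _ = |c| := by rw [abs_div]; simp; ring


lemma sum_range_two_mul (m : ℕ) (g : ℕ → ℝ) :
    ∑ i ∈ Finset.range (2 * m), g i = ∑ j ∈ Finset.range m, (g (2 * j) + g (2 * j + 1)) := by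
  induction m with
  | zero => simp
  | succ m ih =>
    rw [Nat.mul_succ, Finset.sum_range_succ, Finset.sum_range_succ, Finset.sum_range_succ, ← ih]; ring

lemma sum_pair {k : ℕ} (f : Fin (2 ^ (k + 1)) → ℝ) :
    ∑ i, f i = ∑ j : Fin (2 ^ k), (f (dbl j) + f (dbl1 j)) := by
  set F : ℕ → ℝ := fun i => if h : i < 2 ^ (k + 1) then f ⟨i, h⟩ else 0 with hF
  have h1 : ∑ i, f i = ∑ i ∈ Finset.range (2 ^ (k + 1)), F i := by
    rw [← Fin.sum_univ_eq_sum_range]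
    exact Finset.sum_congr rfl fun i _ => by simp [hF, i.isLt]
  have h2 : ∑ j : Fin (2 ^ k), (f (dbl j) + f (dbl1 j))
      = ∑ j ∈ Finset.range (2 ^ k), (F (2 * j) + F (2 * j + 1)) := by
    rw [← Fin.sum_univ_eq_sum_range (fun j => F (2 * j) + F (2 * j + 1))]
    refine Finset.sum_congr rfl fun j _ => ?_
    have hj := j.isLt
    have hlt : 2 * j.val < 2 ^ (k + 1) := by simp only [pow_succ]; omega
    have hlt1 : 2 * j.val + 1 < 2 ^ (k + 1) := by simp only [pow_succ]; omega
    simp only [hF, dif_pos hlt, dif_pos hlt1]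
    rfl
  rw [h1, h2, show 2 ^ (k + 1) = 2 * 2 ^ k by ring, sum_range_two_mul]

lemma minkowski {m : ℕ} (f g : Fin m → ℝ) :
    Real.sqrt (∑ i, (f i + g i) ^ 2) ≤ Real.sqrt (∑ i, f i ^ 2) + Real.sqrt (∑ i, g i ^ 2) := by
  let F : EuclideanSpace ℝ (Fin m) := WithLp.toLp 2 f
  let G : EuclideanSpace ℝ (Fin m) := WithLp.toLp 2 g
  have hn : ∀ h : EuclideanSpace ℝ (Fin m), ‖h‖ = Real.sqrt (∑ i, h i ^ 2) := by
    intro h; simp only [EuclideanSpace.norm_eq, Real.norm_eq_abs, sq_abs]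
  have := norm_add_le F G
  rw [hn, hn, hn] at this; simpa [F, G] using this

lemma minkowskiC {m : ℕ} (f g : Fin m → ℂ) :
    Real.sqrt (∑ i, ‖f i + g i‖ ^ 2)
      ≤ Real.sqrt (∑ i, ‖f i‖ ^ 2) + Real.sqrt (∑ i, ‖g i‖ ^ 2) := by
  let F : EuclideanSpace ℂ (Fin m) := WithLp.toLp 2 f
  let G : EuclideanSpace ℂ (Fin m) := WithLp.toLp 2 g
  have hn : ∀ h : EuclideanSpace ℂ (Fin m), ‖h‖ = Real.sqrt (∑ i, ‖h i‖ ^ 2) := by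
    intro h; simp only [EuclideanSpace.norm_eq]
  have := norm_add_le F G
  rw [hn, hn, hn] at this; simpa [F, G] using this

/-- per-pair estimate -/
lemma pair_est (a b αe αa δ : ℝ) (hb : 0 ≤ b) (hδ : |αa - αe| ≤ δ) :
    (b * Real.cos αe - a * Real.cos αa) ^ 2 + (b * Real.sin αe - a * Real.sin αa) ^ 2
      ≤ (|b - a| + b * δ) ^ 2 := by
  have hδ0 : 0 ≤ δ := le_trans (abs_nonneg _) hδ
  set z : ℂ := b * Complex.exp (αe * Complex.I) - a * Complex.exp (αa * Complex.I) with hz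
  have h1 : (b * Real.cos αe - a * Real.cos αa) ^ 2 + (b * Real.sin αe - a * Real.sin αa) ^ 2
      = ‖z‖ ^ 2 := by
    rw [Complex.sq_norm, hz, Complex.exp_mul_I, Complex.exp_mul_I]
    have : (b : ℂ) * (Complex.cos αe + Complex.sin αe * Complex.I)
        - a * (Complex.cos αa + Complex.sin αa * Complex.I)
        = Complex.ofReal (b * Real.cos αe - a * Real.cos αa)
          + Complex.ofReal (b * Real.sin αe - a * Real.sin αa) * Complex.I := by
      simp [Complex.ofReal_cos, Complex.ofReal_sin]; ring
    rw [this, Complex.normSq_add_mul_I]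
  have h2 : ‖z‖ ≤ |b - a| + b * δ := by
    have hdec : z = ((b : ℂ) - a) * Complex.exp (αa * Complex.I)
        + b * (Complex.exp (αe * Complex.I) - Complex.exp (αa * Complex.I)) := by ring
    calc ‖z‖ ≤ ‖((b : ℂ) - a) * Complex.exp (αa * Complex.I)‖
          + ‖(b : ℂ) * (Complex.exp (αe * Complex.I) - Complex.exp (αa * Complex.I))‖ := by
          rw [hdec]; exact norm_add_le _ _
      _ ≤ |b - a| + b * δ := by
          rw [norm_mul, norm_mul, Complex.norm_exp_ofReal_mul_I, mul_one,
            show ((b:ℂ) - a) = Complex.ofReal (b - a) by push_cast; ring, Complex.norm_real, Real.norm_eq_abs,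
            Complex.norm_real, Real.norm_eq_abs, abs_of_nonneg hb]
          have hch : ‖Complex.exp ((αe:ℝ) * Complex.I) - Complex.exp ((αa:ℝ) * Complex.I)‖ ≤ δ := by
            calc ‖_‖ ≤ |αe - αa| := chord_le αe αa
              _ = |αa - αe| := abs_sub_comm _ _
              _ ≤ δ := hδ
          have := mul_le_mul_of_nonneg_left hch hb
          linarith
  have h3 : 0 ≤ |b - a| + b * δ := by positivity
  calc _ = ‖z‖ ^ 2 := h1
    _ ≤ (|b - a| + b * δ) ^ 2 := by nlinarith [norm_nonneg z]



/-- Overall fidelity of the deterministic state-preparation algorithm for a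
complex vector `x` with polar decomposition `x_i = r_i e^{iθ_i}`: with
`t = ⌈log₂(2(n−1)√2·π/ε)⌉ + 1` bits for the amplitude angles and
`t' = n + 1 + ⌈log₂(2π/ε)⌉` bits for the phases, the prepared vector
`x̃_i = e^{iθ̃_i}(x̃_R)_i` satisfies `‖x/‖x‖ − x̃‖ ≤ ε`. -/
theorem deterministic_preparation_complex (n : ℕ) (hn : 2 ≤ n)
    (x : Fin (2 ^ n) → ℂ) (hxne : x ≠ 0)
    (r θ : Fin (2 ^ n) → ℝ) (hr : ∀ i, 0 ≤ r i)
    (hθr : ∀ i, θ i ∈ Set.Ico 0 (2 * Real.pi))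
    (hx : ∀ i, x i = (r i : ℂ) * Complex.exp (θ i * Complex.I))
    (ε : ℝ) (hε : 0 < ε) (t t' : ℤ)
    (ht : t = ⌈Real.logb 2 (2 * ((n : ℝ) - 1) * Real.sqrt 2 * Real.pi / ε)⌉ + 1)
    (ht' : t' = n + 1 + ⌈Real.logb 2 (2 * Real.pi / ε)⌉)
    (p : Fin (2 ^ n) → ℝ)
    (hp : ∀ i, p i = r i ^ 2 / ∑ j, r j ^ 2)
    (pm : ∀ k : ℕ, Fin (2 ^ k) → ℝ)
    (hpmn : pm n = p)
    (hpm : ∀ k, k < n → ∀ j : Fin (2 ^ k),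
      pm k j = pm (k + 1) (dbl j) + pm (k + 1) (dbl1 j))
    (α : ∀ k : ℕ, Fin (2 ^ k) → ℝ)
    (hα : ∀ k, k < n → ∀ j : Fin (2 ^ k),
      (0 < pm k j →
        α k j = Real.arccos (Real.sqrt (pm (k + 1) (dbl j) / pm k j))) ∧
      (pm k j = 0 → α k j = 0))
    (αt : ∀ k : ℕ, Fin (2 ^ k) → ℝ)
    (hαt0 : αt 0 = α 0)
    (hαt : ∀ k, 1 ≤ k → k ≤ n - 1 → ∀ j : Fin (2 ^ k),
      |αt k j - α k j| ≤ Real.pi / (2 : ℝ) ^ (t - 1))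
    (xtR : ∀ k : ℕ, Fin (2 ^ k) → ℝ)
    (hxtR1 : ∀ j : Fin (2 ^ 1),
      xtR 1 j = if j.val = 0 then Real.cos (αt 0 0) else Real.sin (αt 0 0))
    (hxtRrec : ∀ k, 1 ≤ k → k ≤ n - 1 → ∀ j : Fin (2 ^ k),
      xtR (k + 1) (dbl j) = xtR k j * Real.cos (αt k j) ∧
      xtR (k + 1) (dbl1 j) = xtR k j * Real.sin (αt k j))
    (θt : Fin (2 ^ n) → ℝ)
    (hθt : ∀ i, |θ i - θt i| ≤ 2 * Real.pi / (2 : ℝ) ^ t')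
    (xt : Fin (2 ^ n) → ℂ)
    (hxt : ∀ i, xt i = Complex.exp (θt i * Complex.I) * (xtR n i : ℂ)) :
    Real.sqrt (∑ i, ‖
        x i / (Real.sqrt (∑ j, r j ^ 2) : ℂ) - xt i‖ ^ 2) ≤ ε := by
  set S : ℝ := ∑ j, r j ^ 2 with hSdef
  -- S > 0
  have hS : 0 < S := by
    obtain ⟨i, hi⟩ : ∃ i, x i ≠ 0 := by
      by_contra h; push_neg at h; exact hxne (funext h)
    have hri : r i ≠ 0 := by
      intro h0; apply hi; rw [hx i, h0]; simp
    have h1 : 0 < r i ^ 2 := by positivity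
    have h2 : r i ^ 2 ≤ S := Finset.single_le_sum (f := fun j => r j ^ 2)
      (fun j _ => by positivity) (Finset.mem_univ i)
    linarith
  have hpnn : ∀ i, 0 ≤ p i := fun i => by rw [hp]; positivity
  have hpsum : ∑ i, p i = 1 := by
    simp only [hp]; rw [← Finset.sum_div, ← hSdef, div_self (ne_of_gt hS)]
  set δ : ℝ := Real.pi / (2 : ℝ) ^ (t - 1) with hδdef
  set Δ : ℝ := 2 * Real.pi / (2 : ℝ) ^ t' with hΔdef
  have h2t1 : (0:ℝ) < (2 : ℝ) ^ (t - 1) := zpow_pos (by norm_num) _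
  have h2t' : (0:ℝ) < (2 : ℝ) ^ t' := zpow_pos (by norm_num) _
  have hδ0 : 0 ≤ δ := by rw [hδdef]; positivity
  have hΔ0 : 0 ≤ Δ := by rw [hΔdef]; positivity
  -- pm facts
  have key : ∀ d : ℕ, ∀ k, k + d = n → (∀ j, 0 ≤ pm k j) ∧ (∑ j, pm k j = 1) := by
    intro d
    induction d with
    | zero =>
      intro k hk
      have : k = n := by omega
      subst this
      rw [hpmn]
      exact ⟨hpnn, hpsum⟩
    | succ d ih =>
      intro k hk
      have hkn : k < n := by omega
      obtain ⟨ihn, ihs⟩ := ih (k + 1) (by omega)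
      refine ⟨fun j => ?_, ?_⟩
      · rw [hpm k hkn j]; exact add_nonneg (ihn _) (ihn _)
      · rw [Finset.sum_congr rfl fun j _ => hpm k hkn j, ← _root_.sum_pair, ihs]
  have hnn : ∀ k, k ≤ n → ∀ j, 0 ≤ pm k j := fun k hk => (key (n - k) k (by omega)).1
  have hsum1 : ∀ k, k ≤ n → ∑ j, pm k j = 1 := fun k hk => (key (n - k) k (by omega)).2
  -- key cos/sin identities
  have keycs : ∀ k, k < n → ∀ j : Fin (2 ^ k),
      Real.sqrt (pm (k + 1) (dbl j)) = Real.sqrt (pm k j) * Real.cos (α k j) ∧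
      Real.sqrt (pm (k + 1) (dbl1 j)) = Real.sqrt (pm k j) * Real.sin (α k j) := by
    intro k hk j
    have h0 := hnn k (le_of_lt hk) j
    have ha := hnn (k + 1) hk (dbl j)
    have hb := hnn (k + 1) hk (dbl1 j)
    have hsum := hpm k hk j
    rcases eq_or_lt_of_le h0 with h | h
    · have hza : pm (k + 1) (dbl j) = 0 := by linarith
      have hzb : pm (k + 1) (dbl1 j) = 0 := by linarith
      have hα0 := (hα k hk j).2 h.symm
      rw [hza, hzb, ← h, hα0]
      simp
    · have hαe := (hα k hk j).1 h
      set q := pm (k + 1) (dbl j) / pm k j with hq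
      have hq0 : 0 ≤ q := div_nonneg ha (le_of_lt h)
      have hq1 : q ≤ 1 := by rw [hq, div_le_one h]; linarith
      have hsq1 : Real.sqrt q ≤ 1 := by
        rw [show (1:ℝ) = Real.sqrt 1 by simp]; exact Real.sqrt_le_sqrt hq1
      have hcos : Real.cos (α k j) = Real.sqrt q := by
        rw [hαe]; exact Real.cos_arccos (by linarith [Real.sqrt_nonneg q]) hsq1
      have hsin : Real.sin (α k j) = Real.sqrt (1 - q) := by
        rw [hαe, Real.sin_arccos, Real.sq_sqrt hq0]
      constructor
      · rw [hcos, ← Real.sqrt_mul h0, hq]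
        congr 1
        field_simp
      · rw [hsin, ← Real.sqrt_mul h0]
        congr 1
        rw [hq]
        field_simp
        linarith
  -- amplitude induction
  have amp : ∀ k, 1 ≤ k → k ≤ n →
      Real.sqrt (∑ j : Fin (2 ^ k), (Real.sqrt (pm k j) - xtR k j) ^ 2) ≤ ((k : ℝ) - 1) * δ := by
    intro k
    induction k with
    | zero => intro h; omega
    | succ k ih =>
      intro _ hk1n
      by_cases hk0 : k = 0
      · subst hk0
        have hz : ∀ i : Fin (2 ^ 1), (Real.sqrt (pm 1 i) - xtR 1 i) ^ 2 = 0 := by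
          intro i
          have h20 : (2:ℕ) ^ 0 = 1 := by norm_num
          have hn0 : 0 < n := by omega
          have huniv : ∀ j : Fin (2 ^ 0), j = (0 : Fin (2 ^ 0)) := by
            intro j
            have := j.isLt
            apply Fin.ext
            simp only [h20] at this ⊢
            omega
          have hpm0 : pm 0 0 = 1 := by
            have := hsum1 0 (by omega)
            rwa [Finset.sum_eq_single_of_mem (0 : Fin (2 ^ 0)) (Finset.mem_univ _)
              (fun b _ hb => absurd (huniv b) hb)] at this
          obtain ⟨hc, hs⟩ := keycs 0 hn0 (0 : Fin (2 ^ 0))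
          rw [hpm0, Real.sqrt_one, one_mul] at hc hs
          have hiv : i.val < 2 := by simpa using i.isLt
          rcases (by omega : i.val = 0 ∨ i.val = 1) with h | h
          · have : i = dbl (0 : Fin (2 ^ 0)) := by apply Fin.ext; simp [dbl, h]
            rw [this, hc, hxtR1, hαt0]
            simp [dbl]
          · have : i = dbl1 (0 : Fin (2 ^ 0)) := by apply Fin.ext; simp [dbl1, h]
            rw [this, hs, hxtR1, hαt0]
            simp [dbl1]
        rw [Finset.sum_eq_zero fun i _ => hz i, Real.sqrt_zero]
        norm_num
      · have hk1 : 1 ≤ k := by omega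
        have hkn1 : k ≤ n - 1 := by omega
        have hkn : k < n := by omega
        have IH := ih hk1 (by omega)
        set e : Fin (2 ^ (k + 1)) → ℝ := fun i => Real.sqrt (pm (k + 1) i) - xtR (k + 1) i with he
        set d : Fin (2 ^ k) → ℝ := fun j => Real.sqrt (pm k j) - xtR k j with hd
        have hpair : ∀ j : Fin (2 ^ k),
            e (dbl j) ^ 2 + e (dbl1 j) ^ 2 ≤ (|d j| + Real.sqrt (pm k j) * δ) ^ 2 := by
          intro j
          obtain ⟨hc, hs⟩ := keycs k hkn j
          obtain ⟨hrc, hrs⟩ := hxtRrec k hk1 hkn1 j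
          have := pair_est (xtR k j) (Real.sqrt (pm k j)) (α k j) (αt k j) δ
            (Real.sqrt_nonneg _) (hαt k hk1 hkn1 j)
          simp only [he, hd]
          rw [hc, hs, hrc, hrs]
          exact this
        have hsum2 : ∑ i, e i ^ 2 ≤ ∑ j : Fin (2 ^ k), (|d j| + Real.sqrt (pm k j) * δ) ^ 2 := by
          rw [sum_pair (fun i => e i ^ 2)]
          exact Finset.sum_le_sum fun j _ => hpair j
        calc Real.sqrt (∑ i, e i ^ 2)
            ≤ Real.sqrt (∑ j : Fin (2 ^ k), (|d j| + Real.sqrt (pm k j) * δ) ^ 2) :=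
              Real.sqrt_le_sqrt hsum2
          _ ≤ Real.sqrt (∑ j : Fin (2 ^ k), |d j| ^ 2)
              + Real.sqrt (∑ j : Fin (2 ^ k), (Real.sqrt (pm k j) * δ) ^ 2) :=
              minkowski (fun j => |d j|) (fun j => Real.sqrt (pm k j) * δ)
          _ ≤ ((k : ℝ) - 1) * δ + δ := by
              gcongr
              · calc Real.sqrt (∑ j : Fin (2 ^ k), |d j| ^ 2)
                    = Real.sqrt (∑ j : Fin (2 ^ k), d j ^ 2) := by
                      congr 1; exact Finset.sum_congr rfl fun j _ => sq_abs _
                  _ ≤ ((k : ℝ) - 1) * δ := IH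
              · have : ∑ j : Fin (2 ^ k), (Real.sqrt (pm k j) * δ) ^ 2 = δ ^ 2 := by
                  have : ∀ j : Fin (2 ^ k), (Real.sqrt (pm k j) * δ) ^ 2 = pm k j * δ ^ 2 := by
                    intro j
                    rw [mul_pow, Real.sq_sqrt (hnn k (le_of_lt hkn) j)]
                  rw [Finset.sum_congr rfl fun j _ => this j, ← Finset.sum_mul,
                    hsum1 k (le_of_lt hkn), one_mul]
                rw [this, Real.sqrt_sq hδ0]
          _ = (((k:ℕ) + 1 : ℝ) - 1) * δ := by ring
          _ = ((((k + 1 : ℕ)) : ℝ) - 1) * δ := by push_cast; ring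
  have hampn := amp n (by omega) le_rfl
  -- phase part setup
  set c : Fin (2 ^ n) → ℂ := fun i => (Real.sqrt (p i) : ℂ) * Complex.exp (θt i * Complex.I)
    with hc
  set u : Fin (2 ^ n) → ℂ := fun i => x i / (Real.sqrt S : ℂ) with hu
  have hsp : ∀ i, Real.sqrt (p i) = r i / Real.sqrt S := by
    intro i
    rw [hp, Real.sqrt_div (by positivity), Real.sqrt_sq (hr i)]
  have huc : ∀ i, ‖u i - c i‖ ^ 2 ≤ p i * Δ ^ 2 := by
    intro i
    have h1 : u i - c i = ((Real.sqrt (p i) : ℝ) : ℂ)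
        * (Complex.exp (θ i * Complex.I) - Complex.exp (θt i * Complex.I)) := by
      simp only [hu, hc]
      rw [hx i, hsp i]
      push_cast
      ring
    rw [h1, norm_mul, Complex.norm_real, Real.norm_eq_abs, abs_of_nonneg (Real.sqrt_nonneg _)]
    have h2 : ‖Complex.exp (θ i * Complex.I) - Complex.exp (θt i * Complex.I)‖ ≤ Δ :=
      le_trans (chord_le (θ i) (θt i)) (hθt i)
    have h3 : Real.sqrt (p i) * ‖Complex.exp (θ i * Complex.I)
        - Complex.exp (θt i * Complex.I)‖ ≤ Real.sqrt (p i) * Δ :=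
      mul_le_mul_of_nonneg_left h2 (Real.sqrt_nonneg _)
    calc (Real.sqrt (p i) * ‖_‖) ^ 2 ≤ (Real.sqrt (p i) * Δ) ^ 2 := by
          have hnn2 : 0 ≤ Real.sqrt (p i) * ‖Complex.exp (θ i * Complex.I)
              - Complex.exp (θt i * Complex.I)‖ := by positivity
          nlinarith
      _ = p i * Δ ^ 2 := by rw [mul_pow, Real.sq_sqrt (hpnn i)]
  have hcxt : ∀ i, ‖c i - xt i‖ ^ 2 = (Real.sqrt (pm n i) - xtR n i) ^ 2 := by
    intro i
    have h1 : c i - xt i = Complex.exp (θt i * Complex.I)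
        * (((Real.sqrt (p i) - xtR n i : ℝ)) : ℂ) := by
      rw [hc, hxt i]
      push_cast
      ring
    rw [h1, norm_mul, Complex.norm_exp_ofReal_mul_I, one_mul, Complex.norm_real, Real.norm_eq_abs, sq_abs, hpmn]
  -- combine
  have hsplit : Real.sqrt (∑ i, ‖x i / (Real.sqrt S : ℂ) - xt i‖ ^ 2)
      ≤ Real.sqrt (∑ i, ‖u i - c i‖ ^ 2)
        + Real.sqrt (∑ i, ‖c i - xt i‖ ^ 2) := by
    have h1 : ∀ i, x i / (Real.sqrt S : ℂ) - xt i = (u i - c i) + (c i - xt i) := by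
      intro i; rw [hu]; ring
    rw [Finset.sum_congr rfl fun i _ => by rw [h1 i]]
    exact minkowskiC (fun i => u i - c i) (fun i => c i - xt i)
  have hb1 : Real.sqrt (∑ i, ‖u i - c i‖ ^ 2) ≤ Δ := by
    calc Real.sqrt (∑ i, ‖u i - c i‖ ^ 2)
        ≤ Real.sqrt (∑ i, p i * Δ ^ 2) :=
          Real.sqrt_le_sqrt (Finset.sum_le_sum fun i _ => huc i)
      _ = Δ := by rw [← Finset.sum_mul, hpsum, one_mul, Real.sqrt_sq hΔ0]
  have hb2 : Real.sqrt (∑ i, ‖c i - xt i‖ ^ 2) ≤ ((n : ℝ) - 1) * δ := by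
    rw [Finset.sum_congr rfl fun i _ => hcxt i]
    exact hampn
  -- final arithmetic
  have hπ := Real.pi_pos
  have hn1 : (1:ℝ) ≤ (n : ℝ) - 1 := by
    have : (2:ℝ) ≤ (n : ℝ) := by exact_mod_cast hn
    linarith
  have hs2 : (1:ℝ) ≤ Real.sqrt 2 := by
    nlinarith [Real.sq_sqrt (by norm_num : (0:ℝ) ≤ 2), Real.sqrt_nonneg 2]
  have hA : ((n : ℝ) - 1) * δ ≤ ε / 2 := by
    set C : ℝ := 2 * ((n : ℝ) - 1) * Real.sqrt 2 * Real.pi / ε with hCdef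
    have hC : 0 < C := by rw [hCdef]; positivity
    have hceil : Real.logb 2 C ≤ ((t - 1 : ℤ) : ℝ) := by
      rw [ht]
      push_cast
      have := Int.le_ceil (Real.logb 2 C)
      rw [hCdef] at this ⊢
      linarith
    have h2tC : C ≤ (2 : ℝ) ^ (t - 1) := by
      calc C = (2:ℝ) ^ (Real.logb 2 C) := (Real.rpow_logb (by norm_num) (by norm_num) hC).symm
        _ ≤ (2:ℝ) ^ (((t - 1 : ℤ) : ℝ)) := Real.rpow_le_rpow_of_exponent_le (by norm_num) hceil
        _ = (2 : ℝ) ^ (t - 1) := Real.rpow_intCast 2 (t - 1)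
    have hδC : δ ≤ Real.pi / C := by
      rw [hδdef]
      gcongr
    have heq : ((n : ℝ) - 1) * (Real.pi / C) = ε / (2 * Real.sqrt 2) := by
      rw [hCdef]
      have hne : (n : ℝ) - 1 ≠ 0 := by linarith
      have hs2ne : Real.sqrt 2 ≠ 0 := by linarith
      field_simp
    have : ((n : ℝ) - 1) * δ ≤ ((n : ℝ) - 1) * (Real.pi / C) := by
      apply mul_le_mul_of_nonneg_left hδC (by linarith)
    rw [heq] at this
    have : ε / (2 * Real.sqrt 2) ≤ ε / 2 := by gcongr; linarith
    linarith
  have hB : Δ ≤ ε / 2 := by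
    set D : ℝ := 2 * Real.pi / ε with hDdef
    have hD : 0 < D := by rw [hDdef]; positivity
    have hceil : 1 + Real.logb 2 D ≤ ((t' : ℤ) : ℝ) := by
      rw [ht']
      push_cast
      have h1 := Int.le_ceil (Real.logb 2 D)
      rw [hDdef] at h1 ⊢
      have : (1:ℝ) ≤ (n : ℝ) := by
        have : (2:ℝ) ≤ (n : ℝ) := by exact_mod_cast hn
        linarith
      linarith
    have h2tD : 2 * D ≤ (2 : ℝ) ^ t' := by
      calc 2 * D = (2:ℝ) ^ ((1 : ℝ) + Real.logb 2 D) := by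
            rw [Real.rpow_add (by norm_num), Real.rpow_one, Real.rpow_logb (by norm_num) (by norm_num) hD]
        _ ≤ (2:ℝ) ^ (((t' : ℤ) : ℝ)) := Real.rpow_le_rpow_of_exponent_le (by norm_num) hceil
        _ = (2 : ℝ) ^ t' := Real.rpow_intCast 2 t'
    have hΔD : Δ ≤ 2 * Real.pi / (2 * D) := by
      rw [hΔdef]
      gcongr
      all_goals first | exact h2tD | positivity
    have heq : 2 * Real.pi / (2 * D) = ε / 2 := by
      rw [hDdef]
      field_simp
    rw [heq] at hΔD
    exact hΔD
  calc Real.sqrt (∑ i, ‖x i / (Real.sqrt S : ℂ) - xt i‖ ^ 2)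
      ≤ Real.sqrt (∑ i, ‖u i - c i‖ ^ 2)
        + Real.sqrt (∑ i, ‖c i - xt i‖ ^ 2) := hsplit
    _ ≤ Δ + ((n : ℝ) - 1) * δ := add_le_add hb1 hb2
    _ ≤ ε / 2 + ε / 2 := add_le_add hB hA
    _ = ε := by ring
end
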